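/- Let K be a continuously differentiable probability density supported on [−1, 1], and set IK(x) = ∫_{−∞}^x K(y) dy, K_h(u) = h^{-1} K(u/h), IK_h(x) = IK(x/h). Let μ be a probability measure on ℝ with compact support and distribution function F, and define 𝔽_{h_0}(x) = ∫ K_{h_0}(x − y) F(y) dy. Then for all t ∈ ℝ and all h, h_0 > 0: ∫ [ ∫ IK_h(t − x) K_{h_0}(x − y) dx − IK_{h_0}(t − y) ] dμ(y) = ∫ K_h(t − x) 𝔽_{h_0}(x) dx − 𝔽_{h_0}(t). -/

import Mathlib

open MeasureTheory Filter Set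

section BootstrapHelpers

variable {K : ℝ → ℝ}

private lemma K_integrable (hKc : Continuous K)
    (hKs : ∀ x, x ∉ Set.Icc (-1 : ℝ) 1 → K x = 0) : Integrable K :=
  hKc.integrable_of_hasCompactSupport (HasCompactSupport.intro isCompact_Icc hKs)

private lemma IK_eq (hKc : Continuous K)
    (hKs : ∀ x, x ∉ Set.Icc (-1 : ℝ) 1 → K x = 0) (c : ℝ) :
    (∫ u in Iic c, K u) = ∫ u in (-2 : ℝ)..c, K u := by
  have hint := K_integrable hKc hKs
  have h1 : (∫ u in Iic c, K u) - ∫ u in Iic (-2 : ℝ), K u = ∫ u in (-2 : ℝ)..c, K u :=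
    intervalIntegral.integral_Iic_sub_Iic hint.integrableOn hint.integrableOn
  have h2 : (∫ u in Iic (-2 : ℝ), K u) = 0 := by
    apply setIntegral_eq_zero_of_forall_eq_zero
    intro x hx
    apply hKs
    rw [Set.mem_Icc]; push_neg; intro hge
    have : x ≤ -2 := hx
    linarith
  linarith

private lemma IK_zero (hKs : ∀ x, x ∉ Set.Icc (-1 : ℝ) 1 → K x = 0)
    {c : ℝ} (hc : c < -1) : (∫ u in Iic c, K u) = 0 := by
  apply setIntegral_eq_zero_of_forall_eq_zero
  intro x hx
  apply hKs
  rw [Set.mem_Icc]; push_neg; intro hge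
  have : x ≤ c := hx
  linarith

private lemma IK_hasDerivAt (hKc : Continuous K)
    (hKs : ∀ x, x ∉ Set.Icc (-1 : ℝ) 1 → K x = 0) (c : ℝ) :
    HasDerivAt (fun c => ∫ u in Iic c, K u) (K c) c := by
  have hint := K_integrable hKc hKs
  have heq : (fun c => ∫ u in Iic c, K u) = fun c => ∫ u in (-2 : ℝ)..c, K u :=
    funext (IK_eq hKc hKs)
  rw [heq]
  exact intervalIntegral.integral_hasDerivAt_right hint.intervalIntegrable
    hKc.stronglyMeasurable.stronglyMeasurableAtFilter hKc.continuousAt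

private lemma IK_cont (hKc : Continuous K)
    (hKs : ∀ x, x ∉ Set.Icc (-1 : ℝ) 1 → K x = 0) :
    Continuous (fun c => ∫ u in Iic c, K u) := by
  rw [continuous_iff_continuousAt]
  exact fun c => (IK_hasDerivAt hKc hKs c).continuousAt

private lemma IK_nonneg (hKnn : ∀ x, 0 ≤ K x) (c : ℝ) :
    0 ≤ ∫ u in Iic c, K u :=
  setIntegral_nonneg measurableSet_Iic fun x _ => hKnn x

private lemma IK_le_one (hKc : Continuous K)
    (hKs : ∀ x, x ∉ Set.Icc (-1 : ℝ) 1 → K x = 0) (hKnn : ∀ x, 0 ≤ K x)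
    (hKint : ∫ x, K x = 1) (c : ℝ) : (∫ u in Iic c, K u) ≤ 1 := by
  calc (∫ u in Iic c, K u) ≤ ∫ x, K x :=
        setIntegral_le_integral (K_integrable hKc hKs) (Filter.Eventually.of_forall hKnn)
    _ = 1 := hKint

private lemma ker_integrable (hKc : Continuous K)
    (hKs : ∀ x, x ∉ Set.Icc (-1 : ℝ) 1 → K x = 0) {η : ℝ} (hη : 0 < η) (c : ℝ) :
    Integrable (fun y => η⁻¹ * K ((c - y) / η)) := by
  have hc : Continuous fun y : ℝ => K ((c - y) / η) := hKc.comp (by fun_prop)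
  have hcs : HasCompactSupport fun y : ℝ => K ((c - y) / η) := by
    apply HasCompactSupport.intro (isCompact_Icc (a := c - η) (b := c + η))
    intro x hx
    apply hKs
    simp only [Set.mem_Icc, not_and_or, not_le] at hx ⊢
    rcases hx with h1 | h1
    · right; rw [lt_div_iff₀ hη]; linarith
    · left; rw [div_lt_iff₀ hη]; linarith
  exact (hc.integrable_of_hasCompactSupport hcs).const_mul _

private lemma cov (hKc : Continuous K)
    (hKs : ∀ x, x ∉ Set.Icc (-1 : ℝ) 1 → K x = 0)
    {h₀ : ℝ} (hh₀ : 0 < h₀) (c z : ℝ) :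
    (∫ y in Ici z, h₀⁻¹ * K ((c - y) / h₀)) = ∫ u in Iic ((c - z) / h₀), K u := by
  have hint := K_integrable hKc hKs
  have hg := ker_integrable hKc hKs hh₀ c
  set R := max z (c + h₀ + 1) with hR
  have hzR : z ≤ R := le_max_left _ _
  have hcR : c + h₀ + 1 ≤ R := le_max_right _ _
  have h1 : (∫ y in Ici z, h₀⁻¹ * K ((c - y) / h₀))
      = ∫ y in Ioi z, h₀⁻¹ * K ((c - y) / h₀) := integral_Ici_eq_integral_Ioi
  have h2 : (∫ y in Ioi z, h₀⁻¹ * K ((c - y) / h₀))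
      = (∫ y in Ioc z R, h₀⁻¹ * K ((c - y) / h₀)) + ∫ y in Ioi R, h₀⁻¹ * K ((c - y) / h₀) := by
    rw [← setIntegral_union (Ioc_disjoint_Ioi le_rfl) measurableSet_Ioi
      hg.integrableOn hg.integrableOn, Ioc_union_Ioi_eq_Ioi hzR]
  have h3 : (∫ y in Ioi R, h₀⁻¹ * K ((c - y) / h₀)) = 0 := by
    apply setIntegral_eq_zero_of_forall_eq_zero
    intro x hx
    rw [mem_Ioi] at hx
    have hz : K ((c - x) / h₀) = 0 := by
      apply hKs
      rw [Set.mem_Icc]; push_neg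
      intro hge
      exfalso
      have : (c - x) / h₀ < -1 := by rw [div_lt_iff₀ hh₀]; linarith
      linarith
    rw [hz, mul_zero]
  have h4 : (∫ y in Ioc z R, h₀⁻¹ * K ((c - y) / h₀))
      = ∫ y in z..R, h₀⁻¹ * K ((c - y) / h₀) := (intervalIntegral.integral_of_le hzR).symm
  have h5 : (∫ y in z..R, h₀⁻¹ * K ((c - y) / h₀)) = h₀⁻¹ * ∫ y in z..R, K ((c - y) / h₀) :=
    intervalIntegral.integral_const_mul _ _
  have h6 : (∫ y in z..R, K ((c - y) / h₀)) = ∫ w in (c - R)..(c - z), K (w / h₀) :=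
    intervalIntegral.integral_comp_sub_left (f := fun w => K (w / h₀)) c
  have h7 : (∫ w in (c - R)..(c - z), K (w / h₀))
      = h₀ • ∫ v in (c - R) / h₀..(c - z) / h₀, K v :=
    intervalIntegral.integral_comp_div (f := K) hh₀.ne'
  have hA1 : (c - R) / h₀ < -1 := by rw [div_lt_iff₀ hh₀]; linarith
  have h8 : (∫ v in (c - R) / h₀..(c - z) / h₀, K v) = ∫ u in Iic ((c - z) / h₀), K u := by
    have hadj := intervalIntegral.integral_add_adjacent_intervals
      (a := (-2 : ℝ)) (b := (c - R) / h₀) (c := (c - z) / h₀)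
      hint.intervalIntegrable hint.intervalIntegrable
    have hz2 : (∫ v in (-2 : ℝ)..((c - R) / h₀), K v) = 0 := by
      have hEq : EqOn K (fun _ => (0 : ℝ)) (Set.uIcc (-2 : ℝ) ((c - R) / h₀)) := by
        intro x hx
        apply hKs
        rw [Set.mem_Icc]; push_neg
        intro hge
        rcases Set.mem_uIcc.mp hx with ⟨_, hxu⟩ | ⟨_, hxu⟩ <;> linarith
      rw [intervalIntegral.integral_congr hEq]
      simp
    rw [IK_eq hKc hKs, ← hadj, hz2, zero_add]
  rw [h1, h2, h3, add_zero, h4, h5, h6, h7, smul_eq_mul, ← mul_assoc,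
    inv_mul_cancel₀ hh₀.ne', one_mul, h8]

private lemma integral_eq_intervalIntegral {f : ℝ → ℝ} {a b : ℝ} (hab : a ≤ b)
    (h0 : ∀ x, x ∉ Ioc a b → f x = 0) : (∫ x, f x) = ∫ x in a..b, f x := by
  rw [intervalIntegral.integral_of_le hab,
    setIntegral_eq_integral_of_forall_compl_eq_zero h0]

private lemma parts (hKc : Continuous K)
    (hKs : ∀ x, x ∉ Set.Icc (-1 : ℝ) 1 → K x = 0)
    {t h h₀ : ℝ} (hh : 0 < h) (hh₀ : 0 < h₀) (z : ℝ) :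
    (∫ x, (∫ u in Iic ((t - x) / h), K u) * (h₀⁻¹ * K ((x - z) / h₀)))
      = ∫ x, (h⁻¹ * K ((t - x) / h)) * ∫ u in Iic ((x - z) / h₀), K u := by
  have hint := K_integrable hKc hKs
  set u : ℝ → ℝ := fun x => ∫ w in Iic ((t - x) / h), K w with hu
  set v : ℝ → ℝ := fun x => ∫ w in Iic ((x - z) / h₀), K w with hv
  set a : ℝ := min (z - h₀) (t - h) - 1 with ha
  set b : ℝ := max (z + h₀) (t + h) + 1 with hb2
  have ha1 : a ≤ z - h₀ - 1 := by
    have := min_le_left (z - h₀) (t - h); simp only [ha]; linarith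
  have ha2 : a ≤ t - h - 1 := by
    have := min_le_right (z - h₀) (t - h); simp only [ha]; linarith
  have hb1 : z + h₀ + 1 ≤ b := by
    have := le_max_left (z + h₀) (t + h); simp only [hb2]; linarith
  have hb3 : t + h + 1 ≤ b := by
    have := le_max_right (z + h₀) (t + h); simp only [hb2]; linarith
  have hab : a ≤ b := by linarith
  have hu' : ∀ x, HasDerivAt u (K ((t - x) / h) * (-1 / h)) x := by
    intro x
    have hinner : HasDerivAt (fun x : ℝ => (t - x) / h) (-1 / h) x :=
      ((hasDerivAt_id x).const_sub t).div_const h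
    exact (IK_hasDerivAt hKc hKs ((t - x) / h)).comp x hinner
  have hv' : ∀ x, HasDerivAt v (K ((x - z) / h₀) * (1 / h₀)) x := by
    intro x
    have hinner : HasDerivAt (fun x : ℝ => (x - z) / h₀) (1 / h₀) x :=
      ((hasDerivAt_id x).sub_const z).div_const h₀
    exact (IK_hasDerivAt hKc hKs ((x - z) / h₀)).comp x hinner
  have hu'int : IntervalIntegrable (fun x => K ((t - x) / h) * (-1 / h)) volume a b :=
    ((hKc.comp (by fun_prop)).mul continuous_const).intervalIntegrable a b
  have hv'int : IntervalIntegrable (fun x => K ((x - z) / h₀) * (1 / h₀)) volume a b :=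
    ((hKc.comp (by fun_prop)).mul continuous_const).intervalIntegrable a b
  have hbp := intervalIntegral.integral_mul_deriv_eq_deriv_mul
    (fun x _ => hu' x) (fun x _ => hv' x) hu'int hv'int
  have hub : u b = 0 := by
    apply IK_zero hKs
    rw [div_lt_iff₀ hh]; linarith
  have hva : v a = 0 := by
    apply IK_zero hKs
    rw [div_lt_iff₀ hh₀]; linarith
  have hL : (∫ x, (∫ w in Iic ((t - x) / h), K w) * (h₀⁻¹ * K ((x - z) / h₀)))
      = ∫ x in a..b, u x * (h₀⁻¹ * K ((x - z) / h₀)) := by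
    apply integral_eq_intervalIntegral hab
    intro x hx
    simp only [Set.mem_Ioc, not_and_or, not_lt, not_le] at hx
    have hz : K ((x - z) / h₀) = 0 := by
      apply hKs
      rw [Set.mem_Icc]; push_neg
      rcases hx with h1 | h1
      · intro hge; exfalso
        have : (x - z) / h₀ < -1 := by rw [div_lt_iff₀ hh₀]; linarith
        linarith
      · intro _; rw [lt_div_iff₀ hh₀]; linarith
    rw [hz, mul_zero, mul_zero]
  have hR : (∫ x, (h⁻¹ * K ((t - x) / h)) * ∫ w in Iic ((x - z) / h₀), K w)
      = ∫ x in a..b, (h⁻¹ * K ((t - x) / h)) * v x := by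
    apply integral_eq_intervalIntegral hab
    intro x hx
    simp only [Set.mem_Ioc, not_and_or, not_lt, not_le] at hx
    have hz : K ((t - x) / h) = 0 := by
      apply hKs
      rw [Set.mem_Icc]; push_neg
      rcases hx with h1 | h1
      · intro _; rw [lt_div_iff₀ hh]; linarith
      · intro hge; exfalso
        have : (t - x) / h < -1 := by rw [div_lt_iff₀ hh]; linarith
        linarith
    rw [hz, mul_zero, zero_mul]
  rw [hL, hR]
  have e1 : (∫ x in a..b, u x * (h₀⁻¹ * K ((x - z) / h₀)))
      = ∫ x in a..b, u x * (K ((x - z) / h₀) * (1 / h₀)) :=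
    intervalIntegral.integral_congr fun x _ => by ring
  rw [e1, hbp, hub, hva, zero_mul, mul_zero, sub_zero, zero_sub,
    ← intervalIntegral.integral_neg]
  exact intervalIntegral.integral_congr fun x _ => by ring

private lemma Fub1 (hKc : Continuous K)
    (hKs : ∀ x, x ∉ Set.Icc (-1 : ℝ) 1 → K x = 0) (hKnn : ∀ x, 0 ≤ K x)
    (μ : Measure ℝ) [IsProbabilityMeasure μ]
    (F : ℝ → ℝ) (hF : ∀ x, F x = (μ (Set.Iic x)).toReal)
    {h₀ : ℝ} (hh₀ : 0 < h₀) (c : ℝ) :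
    (∫ y, (h₀⁻¹ * K ((c - y) / h₀)) * F y) = ∫ z, (∫ u in Iic ((c - z) / h₀), K u) ∂μ := by
  have hker := ker_integrable hKc hKs hh₀ c
  have hkernn : ∀ y : ℝ, 0 ≤ h₀⁻¹ * K ((c - y) / h₀) := fun y =>
    mul_nonneg (inv_nonneg.mpr hh₀.le) (hKnn _)
  have hFy : ∀ y, F y = ∫ z, indicator (Ici z) (fun _ => (1 : ℝ)) y ∂μ := by
    intro y
    rw [hF y, ← measureReal_def, ← integral_indicator_one (μ := μ) measurableSet_Iic]
    apply integral_congr_ae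
    refine Filter.Eventually.of_forall fun z => ?_
    simp only [indicator_apply, mem_Iic, mem_Ici, Pi.one_apply]
  have hS : MeasurableSet {p : ℝ × ℝ | p.2 ≤ p.1} := measurableSet_le measurable_snd measurable_fst
  have hcont : Continuous fun p : ℝ × ℝ => h₀⁻¹ * K ((c - p.1) / h₀) := by
    apply continuous_const.mul
    exact hKc.comp ((continuous_const.sub continuous_fst).div_const h₀)
  have hmeas : AEStronglyMeasurable
      (Function.uncurry fun y z =>
        (h₀⁻¹ * K ((c - y) / h₀)) * indicator (Ici z) (fun _ => (1 : ℝ)) y)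
      ((volume : Measure ℝ).prod μ) := by
    have heq : (Function.uncurry fun y z =>
        (h₀⁻¹ * K ((c - y) / h₀)) * indicator (Ici z) (fun _ => (1 : ℝ)) y)
        = fun p : ℝ × ℝ => (h₀⁻¹ * K ((c - p.1) / h₀))
            * indicator {q : ℝ × ℝ | q.2 ≤ q.1} (fun _ => (1 : ℝ)) p := by
      funext p
      simp only [Function.uncurry, indicator_apply, mem_Ici, Set.mem_setOf_eq]
    rw [heq]
    exact hcont.aestronglyMeasurable.mul ((measurable_const.indicator hS).aestronglyMeasurable)
  have hbound : Integrable (fun p : ℝ × ℝ => (h₀⁻¹ * K ((c - p.1) / h₀)) * 1)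
      ((volume : Measure ℝ).prod μ) :=
    Integrable.mul_prod hker (integrable_const 1)
  have hintg : Integrable
      (Function.uncurry fun y z =>
        (h₀⁻¹ * K ((c - y) / h₀)) * indicator (Ici z) (fun _ => (1 : ℝ)) y)
      ((volume : Measure ℝ).prod μ) := by
    apply hbound.mono' hmeas
    refine Filter.Eventually.of_forall fun p => ?_
    have hi : |indicator (Ici p.2) (fun _ => (1 : ℝ)) p.1| ≤ 1 := by
      by_cases hzy : p.1 ∈ Ici p.2 <;> simp [indicator_apply, hzy]
    have h1 : ‖Function.uncurry (fun y z =>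
        (h₀⁻¹ * K ((c - y) / h₀)) * indicator (Ici z) (fun _ => (1 : ℝ)) y) p‖
        = (h₀⁻¹ * K ((c - p.1) / h₀)) * |indicator (Ici p.2) (fun _ => (1 : ℝ)) p.1| := by
      rw [Function.uncurry, Real.norm_eq_abs, abs_mul, abs_of_nonneg (hkernn p.1)]
    rw [h1]
    exact mul_le_mul_of_nonneg_left hi (hkernn p.1)
  have hswap := integral_integral_swap (μ := (volume : Measure ℝ)) (ν := μ)
      (f := fun y z => (h₀⁻¹ * K ((c - y) / h₀)) * indicator (Ici z) (fun _ => (1 : ℝ)) y) hintg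
  have step1 : (∫ y, (h₀⁻¹ * K ((c - y) / h₀)) * F y)
      = ∫ y, ∫ z, (h₀⁻¹ * K ((c - y) / h₀)) * indicator (Ici z) (fun _ => (1 : ℝ)) y ∂μ := by
    simp_rw [hFy, integral_const_mul]
  have step3 : ∀ z : ℝ, (∫ y, (h₀⁻¹ * K ((c - y) / h₀)) * indicator (Ici z) (fun _ => (1 : ℝ)) y)
      = ∫ u in Iic ((c - z) / h₀), K u := by
    intro z
    rw [← cov hKc hKs hh₀ c z, ← integral_indicator measurableSet_Ici]
    apply integral_congr_ae
    refine Filter.Eventually.of_forall fun y => ?_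
    by_cases hzy : y ∈ Ici z <;> simp [indicator_apply, hzy]
  rw [step1, hswap]
  simp_rw [step3]

end BootstrapHelpers

/-- Conditional-bias identity for the smoothed bootstrap: for a continuously
differentiable probability density `K` supported on `[−1,1]`, a compactly supported
probability measure `μ` with distribution function `F`, and
`𝔽_{h₀}(x) = ∫ K_{h₀}(x − y) F(y) dy`, one has for all `t` and `h, h₀ > 0`:
`∫ [ ∫ IK_h(t − x) K_{h₀}(x − y) dx − IK_{h₀}(t − y) ] dμ(y)
  = ∫ K_h(t − x) 𝔽_{h₀}(x) dx − 𝔽_{h₀}(t)`. -/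
theorem bootstrap_bias_identity
    (K : ℝ → ℝ) (hK : ContDiff ℝ 1 K)
    (hKsupp : ∀ x, x ∉ Set.Icc (-1 : ℝ) 1 → K x = 0)
    (hKnonneg : ∀ x, 0 ≤ K x)
    (hKint : ∫ x, K x = 1)
    (μ : Measure ℝ) [IsProbabilityMeasure μ]
    (hμsupp : ∃ s : Set ℝ, IsCompact s ∧ μ sᶜ = 0)
    (F : ℝ → ℝ) (hF : ∀ x, F x = (μ (Set.Iic x)).toReal)
    (t h h₀ : ℝ) (hh : 0 < h) (hh₀ : 0 < h₀) :
    (∫ y, ((∫ x, (∫ u in Set.Iic ((t - x) / h), K u) * (h₀⁻¹ * K ((x - y) / h₀)))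
        - ∫ u in Set.Iic ((t - y) / h₀), K u) ∂μ)
      = (∫ x, (h⁻¹ * K ((t - x) / h)) * ∫ y, (h₀⁻¹ * K ((x - y) / h₀)) * F y)
        - ∫ y, (h₀⁻¹ * K ((t - y) / h₀)) * F y := by
  have hKc : Continuous K := hK.continuous
  -- integrability of the swapped integrand on the product measure
  have hcont2 : Continuous (fun p : ℝ × ℝ =>
      (h⁻¹ * K ((t - p.1) / h)) * ∫ u in Iic ((p.1 - p.2) / h₀), K u) := by
    apply Continuous.mul
    · exact continuous_const.mul
        (hKc.comp ((continuous_const.sub continuous_fst).div_const h))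
    · exact (IK_cont hKc hKsupp).comp
        ((continuous_fst.sub continuous_snd).div_const h₀)
  have hkernn : ∀ x : ℝ, 0 ≤ h⁻¹ * K ((t - x) / h) := fun x =>
    mul_nonneg (inv_nonneg.mpr hh.le) (hKnonneg _)
  have hbound : Integrable (fun p : ℝ × ℝ => (h⁻¹ * K ((t - p.1) / h)) * 1)
      ((volume : Measure ℝ).prod μ) :=
    Integrable.mul_prod (ker_integrable hKc hKsupp hh t) (integrable_const 1)
  have hintg : Integrable
      (Function.uncurry fun x z => (h⁻¹ * K ((t - x) / h)) * ∫ u in Iic ((x - z) / h₀), K u)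
      ((volume : Measure ℝ).prod μ) := by
    apply hbound.mono' hcont2.aestronglyMeasurable
    refine Filter.Eventually.of_forall fun p => ?_
    rw [Real.norm_eq_abs, abs_mul, abs_of_nonneg (hkernn p.1)]
    apply mul_le_mul_of_nonneg_left _ (hkernn p.1)
    rw [abs_of_nonneg (IK_nonneg hKnonneg _)]
    exact IK_le_one hKc hKsupp hKnonneg hKint _
  have hswap := integral_integral_swap (μ := (volume : Measure ℝ)) (ν := μ)
      (f := fun x z => (h⁻¹ * K ((t - x) / h)) * ∫ u in Iic ((x - z) / h₀), K u) hintg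
  -- integrability of the two μ-integrands
  have hIA : Integrable (fun z => ∫ x, (h⁻¹ * K ((t - x) / h))
      * ∫ u in Iic ((x - z) / h₀), K u) μ := hintg.integral_prod_right
  have hIA' : Integrable (fun y => ∫ x, (∫ u in Iic ((t - x) / h), K u)
      * (h₀⁻¹ * K ((x - y) / h₀))) μ :=
    hIA.congr (Filter.Eventually.of_forall fun y => (parts hKc hKsupp hh hh₀ y).symm)
  have hIB : Integrable (fun y => ∫ u in Iic ((t - y) / h₀), K u) μ := by
    have hBc : Continuous fun y : ℝ => ∫ u in Iic ((t - y) / h₀), K u :=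
      (IK_cont hKc hKsupp).comp ((continuous_const.sub continuous_id).div_const h₀)
    apply (integrable_const (1 : ℝ)).mono' hBc.aestronglyMeasurable
    refine Filter.Eventually.of_forall fun y => ?_
    rw [Real.norm_eq_abs, abs_of_nonneg (IK_nonneg hKnonneg _)]
    exact IK_le_one hKc hKsupp hKnonneg hKint _
  rw [integral_sub hIA' hIB]
  congr 1
  · -- main term
    have e1 : (∫ y, (∫ x, (∫ u in Iic ((t - x) / h), K u) * (h₀⁻¹ * K ((x - y) / h₀))) ∂μ)
        = ∫ z, (∫ x, (h⁻¹ * K ((t - x) / h)) * ∫ u in Iic ((x - z) / h₀), K u) ∂μ := by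
      apply integral_congr_ae
      exact Filter.Eventually.of_forall fun y => parts hKc hKsupp hh hh₀ y
    rw [e1, ← hswap]
    apply integral_congr_ae
    refine Filter.Eventually.of_forall fun x => ?_
    beta_reduce
    rw [integral_const_mul, Fub1 hKc hKsupp hKnonneg μ F hF hh₀ x]
  · exact (Fub1 hKc hKsupp hKnonneg μ F hF hh₀ t).symm
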